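/- Baseline invariance: under the policy parameterization hypotheses, and assuming in addition that ∑_{a ∈ A} π θ h s' a = 1 for every θ ∈ ℝ^d, h, s', the following holds for every step i : Fin H and every function b assigning a real number to each trajectory prefix ((s 0, a 0), …, (s (i−1), a (i−1)), s i): ∑_τ f(τ; π θ₀) · b(prefix of τ up to step i) · (π θ₀ i (s i) (a i))⁻¹ • D i (s i) (a i) = 0 as an element of ℝ^d →L[ℝ] ℝ, where the sum ranges over all trajectories τ = (s, a). -/

import Mathlib

open Finset

/-- A trajectory: states at times `0,…,H` and actions at times `0,…,H−1`. -/
abbrev Traj (S A : Type) (H : ℕ) : Type := (Fin (H + 1) → S) × (Fin H → A)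

variable {S A : Type} {H : ℕ}

/-- The set of time-augmented states visited by `τ` up to step `j`. -/
def visitedUpTo [DecidableEq S] (τ : Traj S A H) (j : Fin (H + 1)) :
    Finset (Fin (H + 1) × S) :=
  (Finset.univ.filter fun l => l ≤ j).image fun l => (l, τ.1 l)

/-- The set of time-augmented states visited by the whole trajectory `τ`. -/
def visitedAll [DecidableEq S] (τ : Traj S A H) : Finset (Fin (H + 1) × S) :=
  Finset.univ.image fun l => (l, τ.1 l)

/-- Probability of trajectory `τ` under a Markovian policy table `π`. -/
def trajProb (ρ : S → ℝ) (P : Fin H → S → A → S → ℝ) (π : Fin H → S → A → ℝ)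
    (τ : Traj S A H) : ℝ :=
  ρ (τ.1 0) *
    ∏ h : Fin H, π h (τ.1 h.castSucc) (τ.2 h) * P h (τ.1 h.castSucc) (τ.2 h) (τ.1 h.succ)

/-- The objective `J(π) = ∑_τ f(τ;π) · F(τ)`. -/
def Jobj [Fintype S] [Fintype A] [DecidableEq S] (ρ : S → ℝ) (P : Fin H → S → A → S → ℝ)
    (F : Finset (Fin (H + 1) × S) → ℝ) (π : Fin H → S → A → ℝ) : ℝ :=
  ∑ τ : Traj S A H, trajProb ρ P π τ * F (visitedAll τ)

/-- `π` is a (stochastic) Markovian policy. -/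
def IsMarkovPolicy [Fintype A] (π : Fin H → S → A → ℝ) : Prop :=
  (∀ h s a, 0 ≤ π h s a) ∧ ∀ h s, ∑ a : A, π h s a = 1

/-- `π` is a deterministic Markovian policy. -/
def IsDetMarkovPolicy [Fintype A] (π : Fin H → S → A → ℝ) : Prop :=
  IsMarkovPolicy π ∧ ∀ h s, ∃ a, π h s a = 1

/-- A history-dependent policy: at step `h`, given the prefix
`((s 0, a 0), …, (s (h−1), a (h−1)), s h)`, a weight for each action. -/
abbrev HistPolicy (S A : Type) (H : ℕ) : Type :=
  (h : Fin H) → ((Fin h.1 → S × A) × S) → A → ℝ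

/-- The prefix of trajectory `τ` up to step `h`. -/
def prefixOf (τ : Traj S A H) (h : Fin H) : (Fin h.1 → S × A) × S :=
  (fun l => (τ.1 ⟨l.1, by have := l.2; have := h.2; omega⟩,
             τ.2 ⟨l.1, by have := l.2; have := h.2; omega⟩),
   τ.1 h.castSucc)

/-- Probability of trajectory `τ` under a history-dependent policy `π`. -/
def trajProbHist (ρ : S → ℝ) (P : Fin H → S → A → S → ℝ) (π : HistPolicy S A H)
    (τ : Traj S A H) : ℝ :=
  ρ (τ.1 0) *
    ∏ h : Fin H, π h (prefixOf τ h) (τ.2 h) * P h (τ.1 h.castSucc) (τ.2 h) (τ.1 h.succ)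

/-- The objective for history-dependent policies. -/
def JobjHist [Fintype S] [Fintype A] [DecidableEq S] (ρ : S → ℝ)
    (P : Fin H → S → A → S → ℝ) (F : Finset (Fin (H + 1) × S) → ℝ)
    (π : HistPolicy S A H) : ℝ :=
  ∑ τ : Traj S A H, trajProbHist ρ P π τ * F (visitedAll τ)

/-- `π` is a (stochastic) history-dependent policy. -/
def IsHistPolicy [Fintype A] (π : HistPolicy S A H) : Prop :=
  (∀ h pre a, 0 ≤ π h pre a) ∧ ∀ h pre, ∑ a : A, π h pre a = 1

/-- `π` is a deterministic history-dependent policy. -/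
def IsDetHistPolicy [Fintype A] (π : HistPolicy S A H) : Prop :=
  IsHistPolicy π ∧ ∀ h pre, ∃ a, π h pre a = 1


private lemma sum_pi_succ {β : Type} [Fintype β] {M : Type} [AddCommMonoid M] (n : ℕ)
    (f : (Fin (n + 1) → β) → M) :
    ∑ g : Fin (n + 1) → β, f g = ∑ x : β, ∑ g : Fin n → β, f (Fin.cons x g) := by
  rw [← (Fintype.sum_equiv (Fin.consEquiv fun _ => β) _ _ fun p => rfl :
    ∑ p : β × (Fin n → β), f (Fin.cons p.1 p.2) = ∑ g : Fin (n + 1) → β, f g),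
    Fintype.sum_prod_type]

private lemma chain_one {S A : Type} [Fintype S] [Fintype A] :
    ∀ (n : ℕ) (W : Fin n → S → A → S → ℝ),
      (∀ h s, ∑ a : A, ∑ s' : S, W h s a s' = 1) → ∀ s₀ : S,
      ∑ p : (Fin n → S) × (Fin n → A),
        ∏ h : Fin n, W h ((Fin.cons s₀ p.1 : Fin _ → S) h.castSucc) (p.2 h) (p.1 h) = 1 := by
  intro n
  induction n with
  | zero => intro W hW s₀; simp
  | succ m ih =>
    intro W hW s₀
    rw [Fintype.sum_prod_type, sum_pi_succ]
    have htail : ∀ s₁ : S,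
        ∑ t' : Fin m → S, ∑ g' : Fin m → A,
          ∏ h : Fin m, W h.succ ((Fin.cons s₁ t' : Fin _ → S) h.castSucc) (g' h) (t' h) = 1 := by
      intro s₁
      have := ih (fun h => W h.succ) (fun h s => hW h.succ s) s₁
      rw [Fintype.sum_prod_type] at this
      exact this
    calc ∑ s₁ : S, ∑ t' : Fin m → S, ∑ g : Fin (m + 1) → A,
          ∏ h : Fin (m + 1), W h ((Fin.cons s₀ (Fin.cons s₁ t') : Fin _ → S) h.castSucc) (g h)
            ((Fin.cons s₁ t' : Fin _ → S) h)
        = ∑ s₁ : S, ∑ t' : Fin m → S, ∑ a₀ : A, ∑ g' : Fin m → A,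
            W 0 s₀ a₀ s₁ *
              ∏ h : Fin m, W h.succ ((Fin.cons s₁ t' : Fin _ → S) h.castSucc) (g' h) (t' h) := by
          refine Finset.sum_congr rfl fun s₁ _ => Finset.sum_congr rfl fun t' _ => ?_
          rw [sum_pi_succ]
          refine Finset.sum_congr rfl fun a₀ _ => Finset.sum_congr rfl fun g' _ => ?_
          rw [Fin.prod_univ_succ]
          simp [← Fin.succ_castSucc]
      _ = ∑ s₁ : S, ∑ a₀ : A, ∑ t' : Fin m → S, ∑ g' : Fin m → A,
            W 0 s₀ a₀ s₁ *
              ∏ h : Fin m, W h.succ ((Fin.cons s₁ t' : Fin _ → S) h.castSucc) (g' h) (t' h) := by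
          exact Finset.sum_congr rfl fun s₁ _ => Finset.sum_comm
      _ = ∑ s₁ : S, ∑ a₀ : A, W 0 s₀ a₀ s₁ := by
          refine Finset.sum_congr rfl fun s₁ _ => Finset.sum_congr rfl fun a₀ _ => ?_
          simp_rw [← Finset.mul_sum]
          rw [htail s₁, mul_one]
      _ = 1 := by rw [Finset.sum_comm]; exact hW 0 s₀

private lemma prefix_zero {S A : Type} {m : ℕ} (τ : Traj S A (m + 1)) :
    prefixOf τ (0 : Fin (m + 1)) = (fun l => l.elim0, τ.1 0) := by
  unfold prefixOf
  refine Prod.ext (funext fun l => l.elim0) ?_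
  simp

private lemma prefix_cons {S A : Type} {m : ℕ} (s₀ : S) (a₀ : A) (t : Fin (m + 1) → S)
    (g : Fin m → A) (j : Fin m) :
    prefixOf ((Fin.cons s₀ t, Fin.cons a₀ g) : Traj S A (m + 1)) j.succ
      = (Fin.cons (s₀, a₀) (prefixOf ((t, g) : Traj S A m) j).1,
         (prefixOf ((t, g) : Traj S A m) j).2) := by
  unfold prefixOf
  refine Prod.ext ?_ ?_
  · funext l
    induction l using Fin.cases with
    | zero => rfl
    | succ k => rfl
  · show (Fin.cons s₀ t : Fin _ → S) j.succ.castSucc = t j.castSucc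
    rw [← Fin.succ_castSucc, Fin.cons_succ]

private lemma key_lemma {S A : Type} [Fintype S] [Fintype A] {M : Type} [AddCommMonoid M]
    [Module ℝ M] :
    ∀ (n : ℕ) (ρ : S → ℝ) (W : Fin n → S → A → S → ℝ),
      (∀ h s, ∑ a : A, ∑ s' : S, W h s a s' = 1) →
      ∀ (i : Fin n) (b : ((Fin i.1 → S × A) × S) → ℝ) (E : S → A → M),
        (∀ s, ∑ a : A, (∑ s' : S, W i s a s') • E s a = 0) →
        ∑ τ : (Fin (n + 1) → S) × (Fin n → A),
          (ρ (τ.1 0) * ∏ h : Fin n, W h (τ.1 h.castSucc) (τ.2 h) (τ.1 h.succ)) •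
            (b (prefixOf τ i) • E (τ.1 i.castSucc) (τ.2 i)) = 0 := by
  intro n
  induction n with
  | zero => intro ρ W hW i; exact i.elim0
  | succ m ih =>
    intro ρ W hW i
    induction i using Fin.cases with
    | zero =>
      intro b E hE
      have htail : ∀ s₁ : S,
          ∑ t' : Fin m → S, ∑ g' : Fin m → A,
            ∏ h : Fin m, W h.succ ((Fin.cons s₁ t' : Fin _ → S) h.castSucc) (g' h) (t' h) = 1 := by
        intro s₁
        have := chain_one m (fun h => W h.succ) (fun h s => hW h.succ s) s₁
        rw [Fintype.sum_prod_type] at this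
        exact this
      rw [Fintype.sum_prod_type, sum_pi_succ]
      refine Finset.sum_eq_zero fun s₀ _ => ?_
      rw [sum_pi_succ]
      calc ∑ s₁ : S, ∑ t' : Fin m → S, ∑ g : Fin (m + 1) → A,
            (ρ ((Fin.cons s₀ (Fin.cons s₁ t') : Fin _ → S) 0) *
              ∏ h : Fin (m + 1),
                W h ((Fin.cons s₀ (Fin.cons s₁ t') : Fin _ → S) h.castSucc) (g h)
                  ((Fin.cons s₀ (Fin.cons s₁ t') : Fin _ → S) h.succ)) •
              (b (prefixOf (Fin.cons s₀ (Fin.cons s₁ t'), g) (0 : Fin (m + 1))) •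
                E ((Fin.cons s₀ (Fin.cons s₁ t') : Fin _ → S) ((0 : Fin (m + 1)).castSucc))
                  (g 0))
          = ∑ s₁ : S, ∑ t' : Fin m → S, ∑ a₀ : A, ∑ g' : Fin m → A,
              (ρ s₀ * (W 0 s₀ a₀ s₁ *
                ∏ h : Fin m, W h.succ ((Fin.cons s₁ t' : Fin _ → S) h.castSucc) (g' h) (t' h))) •
                (b (fun l => l.elim0, s₀) • E s₀ a₀) := by
            refine Finset.sum_congr rfl fun s₁ _ => Finset.sum_congr rfl fun t' _ => ?_
            rw [sum_pi_succ]
            refine Finset.sum_congr rfl fun a₀ _ => Finset.sum_congr rfl fun g' _ => ?_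
            rw [prefix_zero, Fin.prod_univ_succ]
            simp [← Fin.succ_castSucc]
        _ = ∑ a₀ : A, ∑ s₁ : S, ∑ t' : Fin m → S, ∑ g' : Fin m → A,
              (ρ s₀ * (W 0 s₀ a₀ s₁ *
                ∏ h : Fin m, W h.succ ((Fin.cons s₁ t' : Fin _ → S) h.castSucc) (g' h) (t' h))) •
                (b (fun l => l.elim0, s₀) • E s₀ a₀) := by
            exact (Finset.sum_congr rfl fun s₁ _ => Finset.sum_comm).trans Finset.sum_comm
        _ = ∑ a₀ : A, (ρ s₀ * ∑ s₁ : S, W 0 s₀ a₀ s₁) • (b (fun l => l.elim0, s₀) • E s₀ a₀) := by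
            refine Finset.sum_congr rfl fun a₀ _ => ?_
            simp_rw [← Finset.sum_smul, ← Finset.mul_sum]
            congr 2
            refine Finset.sum_congr rfl fun s₁ _ => ?_
            rw [htail s₁, mul_one]
        _ = 0 := by
            simp_rw [mul_smul, smul_comm _ (b (fun l => l.elim0, s₀))]
            rw [← Finset.smul_sum, ← Finset.smul_sum, hE s₀, smul_zero, smul_zero]
    | succ j =>
      intro b E hE
      rw [Fintype.sum_prod_type, sum_pi_succ]
      refine Finset.sum_eq_zero fun s₀ _ => ?_
      rw [Finset.sum_comm, sum_pi_succ]
      refine Finset.sum_eq_zero fun a₀ _ => ?_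
      rw [Finset.sum_comm]
      have hIH := ih (fun s => ρ s₀ * W 0 s₀ a₀ s) (fun h => W h.succ)
        (fun h s => hW h.succ s) j (fun pr => b (Fin.cons (s₀, a₀) pr.1, pr.2)) E (hE ·)
      rw [Fintype.sum_prod_type] at hIH
      refine Eq.trans ?_ hIH
      refine Finset.sum_congr rfl fun t _ => Finset.sum_congr rfl fun g' _ => ?_
      rw [prefix_cons, Fin.prod_univ_succ]
      simp [← Fin.succ_castSucc, mul_assoc]

/-- Baseline invariance: for any step `i` and any baseline `b`
depending only on the trajectory prefix up to step `i`, the baseline-weighted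
score terms sum to zero. -/
theorem baseline_invariance
    (S A : Type) [Fintype S] [Fintype A] [DecidableEq S] [Nonempty S] [Nonempty A]
    (H : ℕ) (hH : 1 ≤ H)
    (ρ : S → ℝ) (hρ0 : ∀ s, 0 ≤ ρ s) (hρ1 : ∑ s : S, ρ s = 1)
    (P : Fin H → S → A → S → ℝ)
    (hP0 : ∀ h s a s', 0 ≤ P h s a s') (hP1 : ∀ h s a, ∑ s' : S, P h s a s' = 1)
    (d : ℕ) (π : (Fin d → ℝ) → Fin H → S → A → ℝ) (θ₀ : Fin d → ℝ)
    (D : Fin H → S → A → ((Fin d → ℝ) →L[ℝ] ℝ))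
    (hdiff : ∀ h s a, HasFDerivAt (fun θ => π θ h s a) (D h s a) θ₀)
    (hpos : ∀ h s a, 0 < π θ₀ h s a)
    (hsum : ∀ (θ : Fin d → ℝ) h s', ∑ a : A, π θ h s' a = 1)
    (i : Fin H) (b : ((Fin i.1 → S × A) × S) → ℝ) :
    ∑ τ : Traj S A H,
      (trajProb ρ P (π θ₀) τ * b (prefixOf τ i)) •
        ((π θ₀ i (τ.1 i.castSucc) (τ.2 i))⁻¹ • D i (τ.1 i.castSucc) (τ.2 i))
      = 0 := by
  have hDsum : ∀ s : S, ∑ a : A, D i s a = 0 := by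
    intro s
    have h1 : HasFDerivAt (fun θ : Fin d → ℝ => ∑ a : A, π θ i s a)
        (∑ a : A, D i s a) θ₀ := HasFDerivAt.fun_sum fun a _ => hdiff i s a
    have h2 : (fun θ : Fin d → ℝ => ∑ a : A, π θ i s a) = fun _ => (1 : ℝ) :=
      funext fun θ => hsum θ i s
    rw [h2] at h1
    exact h1.unique (hasFDerivAt_const 1 θ₀)
  have hkey := key_lemma H ρ (fun h s a s' => π θ₀ h s a * P h s a s')
    (fun h s => by simp_rw [← Finset.mul_sum, hP1, mul_one]; exact hsum θ₀ h s)
    i b (fun s a => (π θ₀ i s a)⁻¹ • D i s a)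
    (by
      intro s
      have : ∀ a : A, (∑ s' : S, π θ₀ i s a * P i s a s') •
          ((π θ₀ i s a)⁻¹ • D i s a) = D i s a := by
        intro a
        rw [← Finset.mul_sum, hP1, mul_one, smul_smul,
          mul_inv_cancel₀ (ne_of_gt (hpos i s a)), one_smul]
      simp_rw [this]
      exact hDsum s)
  refine Eq.trans ?_ hkey
  refine Finset.sum_congr rfl fun τ _ => ?_
  rw [trajProb, mul_smul, mul_smul]
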